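/- Let Q be a connected loop-less quiver with m vertices and n arrows, and let c = n - m + 1 ≥ 0. Then the cycle type π of the vertex permutation ξ⁻_Q is a partition of m whose length ℓ(π) satisfies 0 ≤ c - (ℓ(π) - 1) and c ≡ ℓ(π) - 1 (mod 2). -/

import Mathlib

open Matrix Polynomial

/-- Incidence matrix of a quiver with vertex set `Fin m`, arrow set `Fin n`,
source map `s` and target map `t`: the column of arrow `i` is `e_{s i} - e_{t i}`. -/
def incMatrix {m n : ℕ} (s t : Fin n → Fin m) : Matrix (Fin m) (Fin n) ℤ :=
  Matrix.of fun v i => (if v = s i then (1 : ℤ) else 0) - (if v = t i then (1 : ℤ) else 0)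

/-- Connectedness of the underlying multigraph of the quiver `(s, t)`. -/
def QuiverConnected {m n : ℕ} (s t : Fin n → Fin m) : Prop :=
  ∀ v w : Fin m,
    Relation.ReflTransGen (fun a b => ∃ i : Fin n, (s i = a ∧ t i = b) ∨ (s i = b ∧ t i = a)) v w

/-- The endpoint of arrow `i` other than `v` (for a loop-less quiver). -/
def otherEnd {m n : ℕ} (s t : Fin n → Fin m) (i : Fin n) (v : Fin m) : Fin m :=
  if s i = v then t i else s i

/-- Iterate the minimally decreasing walk starting at `v`, using only arrows with
index `< b`, always crossing the maximal available arrow. Returns the final vertex. -/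
def xiAux {m n : ℕ} (s t : Fin n → Fin m) (b : ℕ) (v : Fin m) : Fin m :=
  if h : (Finset.univ.filter (fun i : Fin n => (s i = v ∨ t i = v) ∧ i.val < b)).Nonempty then
    xiAux s t
      ((Finset.univ.filter (fun i : Fin n => (s i = v ∨ t i = v) ∧ i.val < b)).max' h).val
      (otherEnd s t
        ((Finset.univ.filter (fun i : Fin n => (s i = v ∨ t i = v) ∧ i.val < b)).max' h) v)
  else v
termination_by b
decreasing_by
  exact (Finset.mem_filter.mp (Finset.max'_mem _ h)).2.2

/-- The permutation of vertices `ξ⁻` determined by structural minimally decreasing walks: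
`xiDown s t v` is the end vertex of the structural decreasing walk starting at `v`. -/
def xiDown {m n : ℕ} (s t : Fin n → Fin m) (v : Fin m) : Fin m :=
  xiAux s t n v

/-- Iterate the minimally increasing walk starting at `v`, using only arrows with
index `≥ b`, always crossing the minimal available arrow. Returns the final vertex. -/
def xiAuxUp {m n : ℕ} (s t : Fin n → Fin m) (b : ℕ) (v : Fin m) : Fin m :=
  if h : (Finset.univ.filter (fun i : Fin n => (s i = v ∨ t i = v) ∧ b ≤ i.val)).Nonempty then
    xiAuxUp s t
      (((Finset.univ.filter (fun i : Fin n => (s i = v ∨ t i = v) ∧ b ≤ i.val)).min' h).val + 1)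
      (otherEnd s t
        ((Finset.univ.filter (fun i : Fin n => (s i = v ∨ t i = v) ∧ b ≤ i.val)).min' h) v)
  else v
termination_by n - b
decreasing_by
  have h1 := (Finset.mem_filter.mp (Finset.min'_mem _ h)).2.2
  have h2 := ((Finset.univ.filter (fun i : Fin n => (s i = v ∨ t i = v) ∧ b ≤ i.val)).min' h).isLt
  omega

/-- The map `ξ⁺`: end vertex of the structural minimally increasing walk starting at `v`. -/
def xiUp {m n : ℕ} (s t : Fin n → Fin m) (v : Fin m) : Fin m :=
  xiAuxUp s t 0 v


/-- Source vertex of a walk-step `(i, ε)`: `s i` if traversed positively, else `t i`. -/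
def stepSrc {m n : ℕ} (s t : Fin n → Fin m) (p : Fin n × Bool) : Fin m :=
  if p.2 then s p.1 else t p.1

/-- Target vertex of a walk-step `(i, ε)`. -/
def stepTgt {m n : ℕ} (s t : Fin n → Fin m) (p : Fin n × Bool) : Fin m :=
  if p.2 then t p.1 else s p.1


/-! ### Auxiliary development -/

namespace Stmt15

open Equiv Equiv.Perm Function Relation

/-! #### Recursion lemmas for `xiAux` -/

lemma xiAux_restrict {m n : ℕ} (s t : Fin (n + 1) → Fin m) :
    ∀ b, b ≤ n → ∀ v, xiAux s t b v = xiAux (s ∘ Fin.castSucc) (t ∘ Fin.castSucc) b v := by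
  intro b
  induction b using Nat.strong_induction_on with
  | _ b ih =>
    intro hb v
    rw [xiAux, xiAux]
    set A := Finset.univ.filter (fun i : Fin (n+1) => (s i = v ∨ t i = v) ∧ i.val < b) with hAdef
    set B := Finset.univ.filter
        (fun j : Fin n => ((s ∘ Fin.castSucc) j = v ∨ (t ∘ Fin.castSucc) j = v) ∧ j.val < b)
      with hBdef
    have memAB : ∀ j : Fin n, j ∈ B → Fin.castSucc j ∈ A := by
      intro j hj
      simp only [hBdef, Finset.mem_filter, Finset.mem_univ, true_and, Function.comp] at hj ⊢
      simpa [hAdef, Finset.mem_filter] using hj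
    have memBA : ∀ i : Fin (n+1), i ∈ A → ∃ j : Fin n, j ∈ B ∧ Fin.castSucc j = i := by
      intro i hi
      simp only [hAdef, Finset.mem_filter, Finset.mem_univ, true_and] at hi
      have hilt : i.val < n := lt_of_lt_of_le hi.2 hb
      refine ⟨⟨i.val, hilt⟩, ?_, by ext; simp⟩
      have : Fin.castSucc (⟨i.val, hilt⟩ : Fin n) = i := by ext; simp
      simp only [hBdef, Finset.mem_filter, Finset.mem_univ, true_and, Function.comp, this]
      exact hi
    by_cases h : A.Nonempty
    · obtain ⟨i, hi⟩ := h
      obtain ⟨j, hj, rfl⟩ := memBA i hi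
      have hB : B.Nonempty := ⟨j, hj⟩
      have hmax : A.max' ⟨_, hi⟩ = Fin.castSucc (B.max' hB) := by
        apply le_antisymm
        · apply Finset.max'_le
          intro y hy
          obtain ⟨j', hj', rfl⟩ := memBA y hy
          exact Fin.castSucc_le_castSucc_iff.mpr (Finset.le_max' _ _ hj')
        · exact Finset.le_max' _ _ (memAB _ (Finset.max'_mem _ hB))
      rw [dif_pos ⟨_, hi⟩, dif_pos hB, hmax]
      have hlt : (B.max' hB).val < b := (Finset.mem_filter.mp (Finset.max'_mem _ hB)).2.2
      have hcast : (Fin.castSucc (B.max' hB)).val = (B.max' hB).val := rfl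
      rw [hcast]
      have hoe : otherEnd s t (Fin.castSucc (B.max' hB)) v
          = otherEnd (s ∘ Fin.castSucc) (t ∘ Fin.castSucc) (B.max' hB) v := rfl
      rw [hoe]
      exact ih _ hlt (le_trans (le_of_lt hlt) hb) _
    · have hB : ¬ B.Nonempty := by
        intro ⟨j, hj⟩; exact h ⟨_, memAB j hj⟩
      rw [dif_neg h, dif_neg hB]

lemma xiDown_succ {m n : ℕ} (s t : Fin (n + 1) → Fin m)
    (hl : s (Fin.last n) ≠ t (Fin.last n)) (v : Fin m) :
    xiDown s t v = xiDown (s ∘ Fin.castSucc) (t ∘ Fin.castSucc)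
      (Equiv.swap (s (Fin.last n)) (t (Fin.last n)) v) := by
  set a := s (Fin.last n) with ha
  set b := t (Fin.last n) with hb
  unfold xiDown
  by_cases hv : v = a ∨ v = b
  · rw [xiAux]
    set A := Finset.univ.filter (fun i : Fin (n+1) => (s i = v ∨ t i = v) ∧ i.val < n + 1)
      with hAdef
    have hlast : Fin.last n ∈ A := by
      simp only [hAdef, Finset.mem_filter, Finset.mem_univ, true_and]
      constructor
      · rcases hv with rfl | rfl
        · exact Or.inl rfl
        · exact Or.inr rfl
      · exact (Fin.last n).isLt
    have hA : A.Nonempty := ⟨_, hlast⟩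
    have hmax : A.max' hA = Fin.last n :=
      le_antisymm (Finset.max'_le _ _ _ (fun y _ => Fin.le_last y)) (Finset.le_max' _ _ hlast)
    rw [dif_pos hA, hmax]
    have hlastval : (Fin.last n).val = n := rfl
    rw [hlastval]
    have hoe : otherEnd s t (Fin.last n) v = Equiv.swap a b v := by
      unfold otherEnd
      rcases hv with rfl | rfl
      · rw [if_pos ha.symm, Equiv.swap_apply_left]
      · rw [if_neg hl, Equiv.swap_apply_right]
    rw [hoe]
    exact xiAux_restrict s t n le_rfl _
  · push_neg at hv
    have hswap : Equiv.swap a b v = v := Equiv.swap_apply_of_ne_of_ne hv.1 hv.2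
    rw [hswap]
    have h1 : xiAux s t (n + 1) v = xiAux s t n v := by
      have hfeq : Finset.univ.filter (fun i : Fin (n+1) => (s i = v ∨ t i = v) ∧ i.val < n + 1)
          = Finset.univ.filter (fun i : Fin (n+1) => (s i = v ∨ t i = v) ∧ i.val < n) := by
        ext i
        simp only [Finset.mem_filter, Finset.mem_univ, true_and, and_congr_right_iff]
        intro hinc
        have : i ≠ Fin.last n := by
          rintro rfl
          rcases hinc with h | h
          · exact hv.1 h.symm
          · exact hv.2 h.symm
        have := Fin.val_lt_last this
        omega
      conv_lhs => rw [xiAux]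
      conv_rhs => rw [xiAux]
      simp only [hfeq]
    rw [h1]
    exact xiAux_restrict s t n le_rfl v

/-! #### Counting classes of quotients -/

section QuotToolkit

variable {α : Type*} [Finite α]

private def qmap (r r' : Setoid α) (h : ∀ x y, r.r x y → r'.r x y) :
    Quotient r → Quotient r' :=
  Quotient.lift (fun x => Quotient.mk r' x) fun x y hxy => Quotient.sound (h x y hxy)

private lemma qmap_surj (r r' : Setoid α) (h : ∀ x y, r.r x y → r'.r x y) :
    Function.Surjective (qmap r r' h) := by
  intro q
  induction q using Quotient.ind with
  | _ x => exact ⟨Quotient.mk r x, rfl⟩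

lemma qcard_le {r r' : Setoid α} (h : ∀ x y, r.r x y → r'.r x y) :
    Nat.card (Quotient r') ≤ Nat.card (Quotient r) :=
  Nat.card_le_card_of_surjective _ (qmap_surj r r' h)

lemma qcard_lt {r r' : Setoid α} (h : ∀ x y, r.r x y → r'.r x y) {a b : α}
    (hab : ¬ r.r a b) (hab' : r'.r a b) :
    Nat.card (Quotient r') < Nat.card (Quotient r) := by
  refine lt_of_le_of_ne (qcard_le h) fun hEq => hab ?_
  have hbij : Function.Bijective (qmap r r' h) :=
    (Nat.bijective_iff_surjective_and_card _).2 ⟨qmap_surj r r' h, hEq.symm⟩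
  exact Quotient.exact (hbij.1 (Quotient.sound hab'))

/-- Relating two more points can only decrease the number of classes by one. -/
lemma qcard_le_succ {r r' : Setoid α} {a b : α}
    (h1 : ∀ x y, r.r x y → r'.r x y)
    (h2 : ∀ x y, r'.r x y → r.r x y ∨ (r.r x a ∧ r.r b y) ∨ (r.r x b ∧ r.r a y)) :
    Nat.card (Quotient r) ≤ Nat.card (Quotient r') + 1 := by
  classical
  have wd : ∀ x y, r.r x y →
      (if r.r x a then (none : Option (Quotient r')) else some (Quotient.mk r' x))
        = (if r.r y a then none else some (Quotient.mk r' y)) := by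
    intro x y hxy
    by_cases hxa : r.r x a
    · have h' : r.r y a := r.trans (r.symm hxy) hxa
      rw [if_pos hxa, if_pos h']
    · have h' : ¬ r.r y a := fun hya => hxa (r.trans hxy hya)
      have h'' : (Quotient.mk r' x) = Quotient.mk r' y := Quotient.sound (h1 _ _ hxy)
      rw [if_neg hxa, if_neg h', h'']
  set G : Quotient r → Option (Quotient r') := Quotient.lift _ wd with hG
  have hinj : Function.Injective G := by
    intro q1 q2
    induction q1 using Quotient.ind with
    | _ x =>
    induction q2 using Quotient.ind with
    | _ y =>
    intro hxy
    simp only [hG, Quotient.lift_mk] at hxy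
    by_cases hxa : r.r x a <;> by_cases hya : r.r y a
    · exact Quotient.sound (r.trans hxa (r.symm hya))
    · rw [if_pos hxa, if_neg hya] at hxy; exact absurd hxy (by simp)
    · rw [if_neg hxa, if_pos hya] at hxy; exact absurd hxy (by simp)
    · rw [if_neg hxa, if_neg hya, Option.some_inj] at hxy
      rcases h2 x y (Quotient.exact hxy) with h | ⟨h, _⟩ | ⟨_, hay⟩
      · exact Quotient.sound h
      · exact absurd h hxa
      · exact absurd (r.symm hay) hya
  haveI : Finite (Quotient r') := Quotient.finite _
  haveI := Fintype.ofFinite (Quotient r')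
  calc Nat.card (Quotient r) ≤ Nat.card (Option (Quotient r')) :=
        Nat.card_le_card_of_injective G hinj
    _ = Nat.card (Quotient r') + 1 := Finite.card_option

lemma qcard_eq_card {r : Setoid α} (h : ∀ x y, r.r x y ↔ x = y) :
    Nat.card (Quotient r) = Nat.card α := by
  refine (Nat.card_eq_of_bijective (Quotient.mk r) ⟨fun x y hxy => (h x y).1 (Quotient.exact hxy),
    fun q => ?_⟩).symm
  induction q using Quotient.ind with
  | _ x => exact ⟨x, rfl⟩

lemma qcard_eq_of_iff {r r' : Setoid α} (h : ∀ x y, r.r x y ↔ r'.r x y) :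
    Nat.card (Quotient r) = Nat.card (Quotient r') := by
  have : r = r' := Setoid.ext h
  subst this
  rfl

/-- Elimination for the equivalence closure of a setoid enlarged by one pair. -/
lemma eqvGen_pair_elim {r : Setoid α} {a b x y : α}
    (h : Relation.EqvGen (fun u v => r.r u v ∨ (u = a ∧ v = b)) x y) :
    r.r x y ∨ (r.r x a ∧ r.r b y) ∨ (r.r x b ∧ r.r a y) := by
  induction h with
  | rel u v huv =>
    rcases huv with h | ⟨rfl, rfl⟩
    · exact .inl h
    · exact .inr (.inl ⟨r.refl _, r.refl _⟩)
  | refl u => exact .inl (r.refl u)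
  | symm u v _ ih =>
    rcases ih with h | ⟨hua, hbv⟩ | ⟨hub, hav⟩
    · exact .inl (r.symm h)
    · exact .inr (.inr ⟨r.symm hbv, r.symm hua⟩)
    · exact .inr (.inl ⟨r.symm hav, r.symm hub⟩)
  | trans u v w _ _ ih1 ih2 =>
    rcases ih1 with h1 | ⟨hua, hbv⟩ | ⟨hub, hav⟩ <;>
      rcases ih2 with h2 | ⟨hva, hbw⟩ | ⟨hvb, haw⟩
    · exact .inl (r.trans h1 h2)
    · exact .inr (.inl ⟨r.trans h1 hva, hbw⟩)
    · exact .inr (.inr ⟨r.trans h1 hvb, haw⟩)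
    · exact .inr (.inl ⟨hua, r.trans hbv h2⟩)
    · exact .inl (r.trans hua (r.trans (r.symm (r.trans hbv hva)) hbw))
    · exact .inl (r.trans hua haw)
    · exact .inr (.inr ⟨hub, r.trans hav h2⟩)
    · exact .inl (r.trans hub hbw)
    · exact .inl (r.trans hub (r.trans (r.symm (r.trans hav hvb)) haw))

end QuotToolkit

/-! #### Cycles of a permutation multiplied by a transposition -/

section PermLemmas

variable {α : Type*} [Finite α] [DecidableEq α]

/-- Chain a reflexive-transitive relation along a same-cycle witness. -/
lemma sameCycle_rec {f : Equiv.Perm α} {R : α → α → Prop}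
    (hrefl : ∀ x, R x x) (htrans : ∀ {x y z}, R x y → R y z → R x z)
    (hstep : ∀ x, R x (f x)) {x y : α} (h : f.SameCycle x y) : R x y := by
  obtain ⟨i, -, hi⟩ := h.exists_pow_eq'
  subst hi
  clear h
  induction i with
  | zero => simpa using hrefl x
  | succ k ih =>
    have : (f ^ (k+1)) x = f ((f ^ k) x) := by rw [pow_succ']; rfl
    rw [this]
    exact htrans ih (hstep _)

lemma sameCycle_one_iff {x y : α} : Equiv.Perm.SameCycle (1 : Equiv.Perm α) x y ↔ x = y := by
  constructor
  · rintro ⟨k, hk⟩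
    simpa using hk
  · rintro rfl; exact Equiv.Perm.SameCycle.refl _ _

/-- Multiplying by a transposition: every same-cycle pair of `g * swap a b` is generated
by same-cycle pairs of `g` together with the pair `(a, b)`. -/
lemma sameCycle_mul_swap_subset (g : Equiv.Perm α) (a b : α) {x y : α}
    (h : (g * Equiv.swap a b).SameCycle x y) :
    Relation.EqvGen (fun u v => g.SameCycle u v ∨ (u = a ∧ v = b)) x y := by
  refine sameCycle_rec (Relation.EqvGen.refl) (fun h1 h2 => Relation.EqvGen.trans _ _ _ h1 h2)
    (fun z => ?_) h
  by_cases hza : z = a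
  · subst hza
    have h1 : (g * Equiv.swap z b) z = g b := by simp [Equiv.Perm.mul_apply]
    rw [h1]
    exact Relation.EqvGen.trans _ _ _ (Relation.EqvGen.rel _ _ (Or.inr ⟨rfl, rfl⟩))
      (Relation.EqvGen.rel _ _ (Or.inl ⟨1, by simp⟩))
  by_cases hzb : z = b
  · subst hzb
    have h1 : (g * Equiv.swap a z) z = g a := by simp [Equiv.Perm.mul_apply]
    rw [h1]
    exact Relation.EqvGen.trans _ _ _ (Relation.EqvGen.symm _ _ (Relation.EqvGen.rel _ _
      (Or.inr ⟨rfl, rfl⟩))) (Relation.EqvGen.rel _ _ (Or.inl ⟨1, by simp⟩))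
  · have h1 : (g * Equiv.swap a b) z = g z := by
      simp [Equiv.Perm.mul_apply, Equiv.swap_apply_of_ne_of_ne hza hzb]
    rw [h1]
    exact Relation.EqvGen.rel _ _ (Or.inl ⟨1, by simp⟩)

/-- If `a` and `b` lie in one cycle of `τ`, multiplying by `swap a b` only refines cycles. -/
lemma sameCycle_of_mul_swap {τ : Equiv.Perm α} {a b : α} (hab : τ.SameCycle a b)
    {x y : α} (h : (τ * Equiv.swap a b).SameCycle x y) : τ.SameCycle x y := by
  refine sameCycle_rec (fun z => Equiv.Perm.SameCycle.refl _ _)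
    (fun h1 h2 => h1.trans h2) (fun z => ?_) h
  by_cases hza : z = a
  · subst hza
    have h1 : (τ * Equiv.swap z b) z = τ b := by simp [Equiv.Perm.mul_apply]
    rw [h1]
    exact hab.trans ⟨1, by simp⟩
  by_cases hzb : z = b
  · subst hzb
    have h1 : (τ * Equiv.swap a z) z = τ a := by simp [Equiv.Perm.mul_apply]
    rw [h1]
    exact hab.symm.trans ⟨1, by simp⟩
  · have h1 : (τ * Equiv.swap a b) z = τ z := by
      simp [Equiv.Perm.mul_apply, Equiv.swap_apply_of_ne_of_ne hza hzb]
    rw [h1]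
    exact ⟨1, by simp⟩

/-- Merging: if `a`, `b` are in different cycles of `g`, they are in the same cycle
of `g * swap a b`. -/
lemma sameCycle_swap_of_not_sameCycle {g : Equiv.Perm α} {a b : α}
    (h : ¬ g.SameCycle a b) : (g * Equiv.swap a b).SameCycle a b := by
  set τ := g * Equiv.swap a b with hτ
  have hP : ∃ k, 0 < k ∧ (g ^ k) b = b :=
    ⟨orderOf g, orderOf_pos g, by rw [pow_orderOf_eq_one]; rfl⟩
  set q := Nat.find hP with hqdef
  have hq := Nat.find_spec hP
  have key : ∀ i, i < q → (τ ^ (i + 1)) a = (g ^ (i + 1)) b := by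
    intro i
    induction i with
    | zero =>
      intro _
      simp [hτ, Equiv.Perm.mul_apply]
    | succ k ih =>
      intro hk
      have hk' : k < q := by omega
      have hne_b : (g ^ (k + 1)) b ≠ b := by
        intro hEq
        exact (Nat.find_min hP hk) ⟨by omega, hEq⟩
      have hne_a : (g ^ (k + 1)) b ≠ a := by
        intro hEq
        exact h (Equiv.Perm.SameCycle.symm ⟨(k + 1 : ℕ), by rw [zpow_natCast]; exact hEq⟩)
      have e1 : (τ ^ (k + 2)) a = τ ((τ ^ (k + 1)) a) := by rw [pow_succ']; rfl
      rw [e1, ih hk', hτ, Equiv.Perm.mul_apply,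
        Equiv.swap_apply_of_ne_of_ne hne_a hne_b]
      rw [show (g ^ (k + 2)) b = g ((g ^ (k+1)) b) by rw [pow_succ']; rfl]
  have hq1 : 1 ≤ q := hq.1
  obtain ⟨i, hi⟩ : ∃ i, q = i + 1 := ⟨q - 1, by omega⟩
  have : (τ ^ q) a = b := by
    rw [hi, key i (by omega), ← hi]
    exact hq.2
  exact ⟨(q : ℤ), by rw [zpow_natCast]; exact this⟩

end PermLemmas

/-! #### The quiver set-up -/

/-- One-step adjacency of the quiver. -/
def stepRel {m n : ℕ} (s t : Fin n → Fin m) : Fin m → Fin m → Prop :=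
  fun a b => ∃ i : Fin n, (s i = a ∧ t i = b) ∨ (s i = b ∧ t i = a)

/-- The setoid of connected components. -/
def connSetoid {m n : ℕ} (s t : Fin n → Fin m) : Setoid (Fin m) where
  r := Relation.ReflTransGen (stepRel s t)
  iseqv := ⟨fun _ => Relation.ReflTransGen.refl,
    fun h => by
      haveI : Std.Symm (stepRel s t) := ⟨fun x y ⟨i, hi⟩ => ⟨i, hi.symm⟩⟩
      exact Std.Symm.symm _ _ h,
    fun h1 h2 => Relation.ReflTransGen.trans h1 h2⟩

/-- The product of the transpositions given by the arrows, from the largest one. -/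
def permOf {m : ℕ} : (n : ℕ) → (Fin n → Fin m) → (Fin n → Fin m) → Equiv.Perm (Fin m)
  | 0, _, _ => 1
  | n + 1, s, t =>
    permOf n (s ∘ Fin.castSucc) (t ∘ Fin.castSucc) * Equiv.swap (s (Fin.last n)) (t (Fin.last n))

lemma permOf_apply : ∀ (n : ℕ) {m : ℕ} (s t : Fin n → Fin m), (∀ i, s i ≠ t i) →
    ∀ v, permOf n s t v = xiDown s t v := by
  intro n
  induction n with
  | zero =>
    intro m s t _ v
    unfold xiDown
    rw [xiAux, dif_neg (by simp)]
    rfl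
  | succ n ih =>
    intro m s t hl v
    have h0 : permOf (n + 1) s t v
        = permOf n (s ∘ Fin.castSucc) (t ∘ Fin.castSucc)
            (Equiv.swap (s (Fin.last n)) (t (Fin.last n)) v) := rfl
    rw [h0, ih (s ∘ Fin.castSucc) (t ∘ Fin.castSucc) (fun i => hl _), xiDown_succ s t (hl _) v]

lemma sign_permOf : ∀ (n : ℕ) {m : ℕ} (s t : Fin n → Fin m), (∀ i, s i ≠ t i) →
    Equiv.Perm.sign (permOf n s t) = (-1 : ℤˣ) ^ n := by
  intro n
  induction n with
  | zero => intro m s t _; simp [permOf]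
  | succ n ih =>
    intro m s t hl
    have h0 : permOf (n + 1) s t
        = permOf n (s ∘ Fin.castSucc) (t ∘ Fin.castSucc)
            * Equiv.swap (s (Fin.last n)) (t (Fin.last n)) := rfl
    rw [h0, Equiv.Perm.sign_mul, ih (s ∘ Fin.castSucc) (t ∘ Fin.castSucc) (fun i => hl _),
      Equiv.Perm.sign_swap (hl _), pow_succ]

lemma stepRel_castSucc {m n : ℕ} {s t : Fin (n + 1) → Fin m} {x y : Fin m}
    (h : stepRel (s ∘ Fin.castSucc) (t ∘ Fin.castSucc) x y) : stepRel s t x y := by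
  obtain ⟨i, hi⟩ := h
  exact ⟨Fin.castSucc i, hi⟩

lemma conn_castSucc {m n : ℕ} {s t : Fin (n + 1) → Fin m} {x y : Fin m}
    (h : (connSetoid (s ∘ Fin.castSucc) (t ∘ Fin.castSucc)).r x y) : (connSetoid s t).r x y :=
  Relation.ReflTransGen.mono (r := stepRel (s ∘ Fin.castSucc) (t ∘ Fin.castSucc)) (p := stepRel s t)
    (fun _ _ h' => stepRel_castSucc h') _ _ h

lemma conn_succ_eqvGen {m n : ℕ} {s t : Fin (n + 1) → Fin m} {x y : Fin m}
    (h : (connSetoid s t).r x y) :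
    Relation.EqvGen (fun u v => (connSetoid (s ∘ Fin.castSucc) (t ∘ Fin.castSucc)).r u v
      ∨ (u = s (Fin.last n) ∧ v = t (Fin.last n))) x y := by
  induction h with
  | refl => exact Relation.EqvGen.refl x
  | tail hxc hstep ih =>
    rename_i c d
    refine Relation.EqvGen.trans _ _ _ ih ?_
    obtain ⟨i, hi⟩ := hstep
    by_cases hlast : i = Fin.last n
    · subst hlast
      rcases hi with ⟨h1, h2⟩ | ⟨h1, h2⟩
      · exact Relation.EqvGen.rel _ _ (Or.inr ⟨h1.symm, h2.symm⟩)
      · exact Relation.EqvGen.symm _ _ (Relation.EqvGen.rel _ _ (Or.inr ⟨h1.symm, h2.symm⟩))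
    · have hilt : i.val < n := Fin.val_lt_last hlast
      have hcast : Fin.castSucc (⟨i.val, hilt⟩ : Fin n) = i := by ext; simp
      refine Relation.EqvGen.rel _ _ (Or.inl (Relation.ReflTransGen.single ?_))
      refine ⟨⟨i.val, hilt⟩, ?_⟩
      simpa only [Function.comp, hcast] using hi

lemma conn_tri {m n : ℕ} {s t : Fin (n + 1) → Fin m} {x y : Fin m}
    (h : (connSetoid s t).r x y) :
    (connSetoid (s ∘ Fin.castSucc) (t ∘ Fin.castSucc)).r x y
      ∨ ((connSetoid (s ∘ Fin.castSucc) (t ∘ Fin.castSucc)).r x (s (Fin.last n))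
          ∧ (connSetoid (s ∘ Fin.castSucc) (t ∘ Fin.castSucc)).r (t (Fin.last n)) y)
      ∨ ((connSetoid (s ∘ Fin.castSucc) (t ∘ Fin.castSucc)).r x (t (Fin.last n))
          ∧ (connSetoid (s ∘ Fin.castSucc) (t ∘ Fin.castSucc)).r (s (Fin.last n)) y) :=
  eqvGen_pair_elim (conn_succ_eqvGen h)

lemma conn_iff_of_conn {m n : ℕ} {s t : Fin (n + 1) → Fin m}
    (hc : (connSetoid (s ∘ Fin.castSucc) (t ∘ Fin.castSucc)).r (s (Fin.last n)) (t (Fin.last n)))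
    (x y : Fin m) :
    (connSetoid s t).r x y ↔ (connSetoid (s ∘ Fin.castSucc) (t ∘ Fin.castSucc)).r x y := by
  set r := connSetoid (s ∘ Fin.castSucc) (t ∘ Fin.castSucc)
  constructor
  · intro h
    rcases conn_tri h with h | ⟨h1, h2⟩ | ⟨h1, h2⟩
    · exact h
    · exact r.trans h1 (r.trans hc h2)
    · exact r.trans h1 (r.trans (r.symm hc) h2)
  · exact conn_castSucc

lemma conn_permOf : ∀ (n : ℕ) {m : ℕ} (s t : Fin n → Fin m) (z : Fin m),
    (connSetoid s t).r z (permOf n s t z) := by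
  intro n
  induction n with
  | zero =>
    intro m s t z
    exact Relation.ReflTransGen.refl
  | succ n ih =>
    intro m s t z
    set a := s (Fin.last n) with ha
    set b := t (Fin.last n) with hb
    have h0 : permOf (n + 1) s t z
        = permOf n (s ∘ Fin.castSucc) (t ∘ Fin.castSucc) (Equiv.swap a b z) := rfl
    rw [h0]
    have h1 : (connSetoid s t).r z (Equiv.swap a b z) := by
      by_cases hza : z = a
      · subst hza
        rw [Equiv.swap_apply_left]
        exact Relation.ReflTransGen.single ⟨Fin.last n, Or.inl ⟨ha.symm, hb.symm⟩⟩
      by_cases hzb : z = b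
      · subst hzb
        rw [Equiv.swap_apply_right]
        exact Relation.ReflTransGen.single ⟨Fin.last n, Or.inr ⟨ha.symm, hb.symm⟩⟩
      · rw [Equiv.swap_apply_of_ne_of_ne hza hzb]
    exact (connSetoid s t).trans h1 (conn_castSucc (ih _ _ _))

lemma sameCycle_imp_conn {m n : ℕ} (s t : Fin n → Fin m) {x y : Fin m}
    (h : (permOf n s t).SameCycle x y) : (connSetoid s t).r x y :=
  sameCycle_rec (fun z => (connSetoid s t).refl z)
    (fun h1 h2 => (connSetoid s t).trans h1 h2) (conn_permOf n s t) h

/-! #### The main induction -/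

lemma main_induction : ∀ (n : ℕ) {m : ℕ} (s t : Fin n → Fin m), (∀ i, s i ≠ t i) →
    Nat.card (Quotient (Equiv.Perm.SameCycle.setoid (permOf n s t))) + m
      ≤ n + 2 * Nat.card (Quotient (connSetoid s t)) := by
  intro n
  induction n with
  | zero =>
    intro m s t _
    have h1 : Nat.card (Quotient (Equiv.Perm.SameCycle.setoid (permOf 0 s t))) = m := by
      rw [qcard_eq_card (fun x y => sameCycle_one_iff), Nat.card_eq_fintype_card,
        Fintype.card_fin]
    have h2 : Nat.card (Quotient (connSetoid s t)) = m := by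
      rw [qcard_eq_card, Nat.card_eq_fintype_card, Fintype.card_fin]
      intro x y
      constructor
      · intro h
        induction h with
        | refl => rfl
        | tail _ hstep ih =>
          obtain ⟨i, _⟩ := hstep
          exact i.elim0
      · rintro rfl
        exact Relation.ReflTransGen.refl
    omega
  | succ n ih =>
    intro m s t hl
    set s' := s ∘ Fin.castSucc with hs'
    set t' := t ∘ Fin.castSucc with ht'
    set a := s (Fin.last n) with ha
    set b := t (Fin.last n) with hb
    have hab : a ≠ b := hl _
    set g := permOf n s' t' with hg
    set τ := permOf (n + 1) s t with hτdef
    have hτ : τ = g * Equiv.swap a b := rfl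
    have hgτ : g = τ * Equiv.swap a b := by
      rw [hτ, mul_assoc, Equiv.swap_mul_self, mul_one]
    have IH := ih s' t' (fun i => hl _)
    rw [← hg] at IH
    -- the number of cycles grows by at most one
    have hsplit : Nat.card (Quotient (Equiv.Perm.SameCycle.setoid τ))
        ≤ Nat.card (Quotient (Equiv.Perm.SameCycle.setoid g)) + 1 := by
      by_cases hsc : g.SameCycle a b
      · refine qcard_le_succ (a := a) (b := b) ?_ ?_
        · intro x y hxy
          have hxy' : τ.SameCycle x y := hxy
          rw [hτ] at hxy'
          exact sameCycle_of_mul_swap hsc hxy'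
        · intro x y hxy
          have hxy' : (τ * Equiv.swap a b).SameCycle x y := by rw [← hgτ]; exact hxy
          exact eqvGen_pair_elim (sameCycle_mul_swap_subset τ a b hxy')
      · have hlt : Nat.card (Quotient (Equiv.Perm.SameCycle.setoid τ))
            < Nat.card (Quotient (Equiv.Perm.SameCycle.setoid g)) := by
          refine qcard_lt (fun x y hxy => ?_) hsc ?_
          · have hxy' : (τ * Equiv.swap a b).SameCycle x y := by rw [← hgτ]; exact hxy
            exact sameCycle_of_mul_swap (by rw [hτ]; exact sameCycle_swap_of_not_sameCycle hsc)
              hxy'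
          · show τ.SameCycle a b
            rw [hτ]
            exact sameCycle_swap_of_not_sameCycle hsc
        omega
    by_cases hc : (connSetoid s' t').r a b
    · have hk : Nat.card (Quotient (connSetoid s t))
          = Nat.card (Quotient (connSetoid s' t')) :=
        qcard_eq_of_iff (fun x y => conn_iff_of_conn hc x y)
      omega
    · -- merge case
      have hnsc : ¬ g.SameCycle a b := fun hsc => hc (sameCycle_imp_conn s' t' hsc)
      have hmerge : Nat.card (Quotient (Equiv.Perm.SameCycle.setoid τ))
          < Nat.card (Quotient (Equiv.Perm.SameCycle.setoid g)) := by
        refine qcard_lt (fun x y hxy => ?_) hnsc ?_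
        · have hxy' : (τ * Equiv.swap a b).SameCycle x y := by rw [← hgτ]; exact hxy
          exact sameCycle_of_mul_swap (by rw [hτ]; exact sameCycle_swap_of_not_sameCycle hnsc)
            hxy'
        · show τ.SameCycle a b
          rw [hτ]
          exact sameCycle_swap_of_not_sameCycle hnsc
      have hkk : Nat.card (Quotient (connSetoid s' t'))
          ≤ Nat.card (Quotient (connSetoid s t)) + 1 :=
        qcard_le_succ (fun x y h => conn_castSucc h) (fun x y h => conn_tri h)
      omega

/-! #### Counting cycles via the partition -/

lemma qcard_sameCycle_eq_parts {β : Type*} [Fintype β] [DecidableEq β] (σ : Equiv.Perm β) :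
    Nat.card (Quotient (Equiv.Perm.SameCycle.setoid σ)) = σ.partition.parts.card := by
  classical
  have hparts : σ.partition.parts.card
      = Multiset.card σ.cycleType + (Fintype.card β - σ.support.card) := by
    rw [Equiv.Perm.parts_partition, Multiset.card_add, Multiset.card_replicate]
  have hct : Multiset.card σ.cycleType = σ.cycleFactorsFinset.card := by
    rw [Equiv.Perm.cycleType_def, Multiset.card_map]
    rfl
  have wd : ∀ x y, (Equiv.Perm.SameCycle.setoid σ).r x y →
      (if hx : x ∈ σ.support
        then (Sum.inl ⟨σ.cycleOf x, Equiv.Perm.cycleOf_mem_cycleFactorsFinset_iff.2 hx⟩ :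
          {c // c ∈ σ.cycleFactorsFinset} ⊕ {x : β // x ∉ σ.support})
        else Sum.inr ⟨x, hx⟩)
      = (if hy : y ∈ σ.support
        then Sum.inl ⟨σ.cycleOf y, Equiv.Perm.cycleOf_mem_cycleFactorsFinset_iff.2 hy⟩
        else Sum.inr ⟨y, hy⟩) := by
    intro x y hxy
    have hxy' : σ.SameCycle x y := hxy
    by_cases hx : x ∈ σ.support
    · have hy : y ∈ σ.support := by
        rw [Equiv.Perm.mem_support] at hx ⊢
        exact fun h => hx (hxy'.apply_eq_self_iff.2 h)
      rw [dif_pos hx, dif_pos hy]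
      exact congrArg Sum.inl (Subtype.ext hxy'.cycleOf_eq)
    · have hy : y ∉ σ.support := by
        rw [Equiv.Perm.mem_support] at hx ⊢
        intro h
        exact h (hxy'.symm.apply_eq_self_iff.2 (not_not.1 hx))
      rw [dif_neg hx, dif_neg hy]
      refine congrArg Sum.inr (Subtype.ext ?_)
      exact hxy'.eq_of_left (not_not.1 (by rwa [Equiv.Perm.mem_support] at hx))
  set F : Quotient (Equiv.Perm.SameCycle.setoid σ)
      → ({c // c ∈ σ.cycleFactorsFinset} ⊕ {x : β // x ∉ σ.support}) :=
    Quotient.lift _ wd with hF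
  have hinj : Function.Injective F := by
    intro q1 q2
    induction q1 using Quotient.ind with
    | _ x =>
    induction q2 using Quotient.ind with
    | _ y =>
    intro hxy
    simp only [hF, Quotient.lift_mk] at hxy
    by_cases hx : x ∈ σ.support <;> by_cases hy : y ∈ σ.support
    · rw [dif_pos hx, dif_pos hy] at hxy
      have hcoeq : σ.cycleOf x = σ.cycleOf y := congrArg Subtype.val (Sum.inl.inj hxy)
      have hyy : y ∈ (σ.cycleOf y).support :=
        Equiv.Perm.mem_support_cycleOf_iff.2 ⟨Equiv.Perm.SameCycle.refl _ _, hy⟩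
      rw [← hcoeq] at hyy
      exact Quotient.sound (Equiv.Perm.mem_support_cycleOf_iff.1 hyy).1
    · rw [dif_pos hx, dif_neg hy] at hxy; exact absurd hxy (by simp)
    · rw [dif_neg hx, dif_pos hy] at hxy; exact absurd hxy (by simp)
    · rw [dif_neg hx, dif_neg hy] at hxy
      have : x = y := congrArg Subtype.val (Sum.inr.inj hxy)
      exact Quotient.sound (this ▸ Equiv.Perm.SameCycle.refl σ x)
  have hsurj : Function.Surjective F := by
    rintro (⟨c, hc⟩ | ⟨x, hx⟩)
    · have hc' := Equiv.Perm.mem_cycleFactorsFinset_iff.1 hc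
      obtain ⟨x, hx1⟩ := hc'.1
      have hxc : x ∈ c.support := Equiv.Perm.mem_support.2 hx1.1
      have hxσ : x ∈ σ.support := by
        rw [Equiv.Perm.mem_support, ← hc'.2 x hxc]
        exact hx1.1
      refine ⟨Quotient.mk _ x, ?_⟩
      simp only [hF, Quotient.lift_mk]
      rw [dif_pos hxσ]
      exact congrArg Sum.inl (Subtype.ext (Equiv.Perm.cycle_is_cycleOf hxc hc).symm)
    · refine ⟨Quotient.mk _ x, ?_⟩
      simp only [hF, Quotient.lift_mk]
      rw [dif_neg hx]
  have hcard := Nat.card_eq_of_bijective F ⟨hinj, hsurj⟩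
  rw [hcard, Nat.card_sum, hparts, hct]
  have e1 : Nat.card {c // c ∈ σ.cycleFactorsFinset} = σ.cycleFactorsFinset.card := by
    rw [Nat.card_eq_fintype_card]
    exact Fintype.card_coe _
  have e2 : Nat.card {x : β // x ∉ σ.support} = Fintype.card β - σ.support.card := by
    rw [Nat.card_eq_fintype_card, Fintype.card_subtype_compl]
    congr 1
    exact Fintype.card_coe _
  rw [e1, e2]

end Stmt15

/-- for a connected loop-less quiver with `m` vertices, `n` arrows and
corank `c = n - m + 1 ≥ 0`, the cycle type of `ξ⁻_Q` is a partition of `m` whose length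
`ℓ` satisfies `ℓ - 1 ≤ c` and `c ≡ ℓ - 1 (mod 2)`. -/
theorem cycleType_length_parity {m n : ℕ} (hm : 0 < m) (s t : Fin n → Fin m)
    (hloop : ∀ i : Fin n, s i ≠ t i) (hconn : QuiverConnected s t)
    (c : ℕ) (hc : c + m = n + 1)
    (σ : Equiv.Perm (Fin m)) (hσ : ∀ v : Fin m, σ v = xiDown s t v) :
    σ.partition.parts.card - 1 ≤ c
    ∧ c ≡ σ.partition.parts.card - 1 [MOD 2] := by
  classical
  have hperm : σ = Stmt15.permOf n s t :=
    Equiv.ext fun v => (hσ v).trans (Stmt15.permOf_apply n s t hloop v).symm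
  set ℓ := σ.partition.parts.card with hℓdef
  have hbridge : Nat.card (Quotient (Equiv.Perm.SameCycle.setoid σ)) = ℓ :=
    Stmt15.qcard_sameCycle_eq_parts σ
  have hconn1 : Nat.card (Quotient (Stmt15.connSetoid s t)) = 1 := by
    rw [Nat.card_eq_one_iff_unique]
    constructor
    · constructor
      intro q1 q2
      induction q1 using Quotient.ind with
      | _ x =>
      induction q2 using Quotient.ind with
      | _ y =>
      exact Quotient.sound (hconn x y)
    · exact ⟨Quotient.mk _ ⟨0, hm⟩⟩
  have hmain := Stmt15.main_induction n s t hloop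
  rw [← hperm, hbridge, hconn1] at hmain
  -- `ℓ ≥ 1`
  have hsum : σ.partition.parts.sum = m := by
    have := σ.partition.parts_sum
    simpa using this
  have hl1 : 1 ≤ ℓ := by
    rcases Nat.eq_zero_or_pos ℓ with h0 | h1
    · exfalso
      have : σ.partition.parts = 0 := Multiset.card_eq_zero.1 h0
      rw [this] at hsum
      simp at hsum
      omega
    · exact h1
  -- parity via the sign
  have hsign1 : Equiv.Perm.sign σ = (-1 : ℤˣ) ^ n := by
    rw [hperm]; exact Stmt15.sign_permOf n s t hloop
  have hsign2 : Equiv.Perm.sign σ = (-1 : ℤˣ) ^ (m + ℓ) := by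
    rw [Equiv.Perm.sign_of_cycleType]
    have hsc : σ.support.card ≤ m := by
      have := Finset.card_le_univ σ.support
      simpa using this
    have hcycsum : σ.cycleType.sum = σ.support.card := σ.sum_cycleType
    have hparts : ℓ = Multiset.card σ.cycleType + (m - σ.support.card) := by
      rw [hℓdef, Equiv.Perm.parts_partition, Multiset.card_add, Multiset.card_replicate]
      simp
    have hexp : m + ℓ = (σ.cycleType.sum + Multiset.card σ.cycleType)
        + 2 * (m - σ.support.card) := by omega
    conv_rhs => rw [hexp, pow_add, pow_mul]
    simp
  have hpar : n % 2 = (m + ℓ) % 2 := by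
    have h12 : (-1 : ℤˣ) ^ n = (-1 : ℤˣ) ^ (m + ℓ) := hsign1.symm.trans hsign2
    rcases Nat.even_or_odd n with he | ho <;> rcases Nat.even_or_odd (m + ℓ) with he2 | ho2
    · rw [Nat.even_iff.1 he, Nat.even_iff.1 he2]
    · exfalso
      rw [he.neg_one_pow, ho2.neg_one_pow] at h12
      exact absurd h12 (by decide)
    · exfalso
      rw [ho.neg_one_pow, he2.neg_one_pow] at h12
      exact absurd h12 (by decide)
    · rw [Nat.odd_iff.1 ho, Nat.odd_iff.1 ho2]
  constructor
  · omega
  · show c % 2 = (ℓ - 1) % 2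
    omega
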